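/- arXiv:2409.01165 — 3 statements merged into one kernel-verified Lean document; each statement's English description precedes it below -/
import Mathlib

section
/- Let f be a trigonometric polynomial (so f̂(n) = 0 for all but finitely many n ∈ ℤ), let ψ ∈ L₂ and j ∈ ℤ₊. Then Σ_{k∈R_j} |⟨f, S^k_j ψ⟩|² = 2^j Σ_{n∈R_j} |h_j(n)|², where h_j(n) := Σ_{q∈ℤ} f̂(2^j q + n) · conj(ψ̂(2^j q + n)). -/
open MeasureTheory Complex Finset Filter ComplexConjugate

noncomputable section

instance : Fact ((0:ℝ) < 1) := ⟨one_pos⟩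

/-- The space `L₂` of 1-periodic square-integrable complex functions, realized as
`Lp ℂ 2` over the additive circle of length 1 with normalized Haar measure. -/
abbrev PL2 : Type := Lp ℂ 2 (@AddCircle.haarAddCircle (1 : ℝ) _)

/-- Fourier coefficient `f̂(n) = ∫₀¹ f(x) e^{-2πinx} dx`. -/
def fCoeff (f : PL2) (n : ℤ) : ℂ := fourierCoeff (f : AddCircle (1 : ℝ) → ℂ) n

/-- Inner product `⟨f, S^k_j g⟩ = ∫₀¹ f(x) conj(g(x + 2^{-j} k)) dx`. -/
def shiftInner (f g : PL2) (j : ℕ) (k : ℤ) : ℂ :=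
  ∫ x : AddCircle (1 : ℝ),
    f x * conj (g (x + (((2:ℝ)^(-(j:ℤ)) * (k:ℝ) : ℝ) : AddCircle (1 : ℝ))))
    ∂AddCircle.haarAddCircle

/-- `R_j = {-2^{j-1}+1, …, 2^{j-1}}` for `j ≥ 1` and `R₀ = {0}`. -/
def Rset (j : ℕ) : Finset ℤ :=
  if j = 0 then {0} else Finset.Icc (-(2^(j-1) : ℤ) + 1) (2^(j-1))

/-- The system `{S^k_j ψ^m_j : j ∈ ℤ₊, 1 ≤ m ≤ ρ_j, k ∈ R_j}` is a Parseval wavelet frame. -/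
def IsParsevalFrame (ρ : ℕ → ℕ) (ψ : ℕ → ℕ → PL2) : Prop :=
  ∀ f : PL2, ‖f‖^2 =
    ∑' j : ℕ, ∑ m ∈ Finset.Icc 1 (ρ j), ∑ k ∈ Rset j,
      ‖shiftInner f (ψ j m) j k‖^2

/-! ### Auxiliary lemmas -/

open scoped Real

/- character / root-of-unity sum -/
lemma char_sum (N : ℕ) (hN : 0 < N) (a m : ℤ) :
    ∑ k ∈ Finset.Icc a (a + N - 1), Complex.exp (2 * π * I * m * k / N)
      = if (N:ℤ) ∣ m then (N:ℂ) else 0 := by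
  have hNC : (N:ℂ) ≠ 0 := Nat.cast_ne_zero.mpr hN.ne'
  set z : ℂ := Complex.exp (2 * π * I * m / N) with hz
  have hzk : ∀ k : ℤ, Complex.exp (2 * π * I * m * k / N) = z ^ k := by
    intro k
    rw [hz, ← Complex.exp_int_mul]
    congr 1
    field_simp
  have hzne : z ≠ 0 := Complex.exp_ne_zero _
  have hre : ∑ k ∈ Finset.Icc a (a + N - 1), z ^ k = z ^ a * ∑ i ∈ Finset.range N, z ^ i := by
    rw [Finset.mul_sum]
    refine Finset.sum_nbij' (fun k => (k - a).toNat) (fun i => a + (i:ℤ)) ?_ ?_ ?_ ?_ ?_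
    · intro k hk
      simp only [Finset.mem_Icc] at hk
      simp only [Finset.mem_range]
      omega
    · intro i hi
      simp only [Finset.mem_range] at hi
      simp only [Finset.mem_Icc]
      omega
    · intro k hk
      simp only [Finset.mem_Icc] at hk
      show a + (((k - a).toNat : ℕ) : ℤ) = k
      omega
    · intro i hi
      simp only [Finset.mem_range] at hi
      show (a + (i:ℤ) - a).toNat = i
      omega
    · intro k hk
      simp only [Finset.mem_Icc] at hk
      show z ^ k = z ^ a * z ^ ((k - a).toNat)
      rw [← zpow_natCast z, ← zpow_add₀ hzne]
      congr 1
      omega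
  have hzN : z ^ (N:ℕ) = 1 := by
    rw [← Complex.exp_nat_mul]
    have : (N:ℂ) * (2 * π * I * m / N) = m * (2 * π * I) := by field_simp
    rw [this, Complex.exp_int_mul_two_pi_mul_I]
  by_cases hdvd : (N:ℤ) ∣ m
  · rw [if_pos hdvd]
    obtain ⟨c, hc⟩ := hdvd
    have hz1 : z = 1 := by
      rw [hz]
      have : 2 * π * I * m / N = c * (2 * π * I) := by
        rw [hc]; push_cast; field_simp
      rw [this, Complex.exp_int_mul_two_pi_mul_I]
    simp_rw [hzk, hre, hz1, one_zpow, one_pow, one_mul, Finset.sum_const, Finset.card_range,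
      nsmul_eq_mul, mul_one]
  · rw [if_neg hdvd]
    have h2 : (2 * ↑π * I : ℂ) ≠ 0 := by
      simp [Real.pi_ne_zero, Complex.I_ne_zero, Complex.ofReal_ne_zero]
    have hz1 : z ≠ 1 := by
      intro h
      rw [hz, Complex.exp_eq_one_iff] at h
      obtain ⟨n, hn⟩ := h
      rw [div_eq_iff hNC] at hn
      apply hdvd
      refine ⟨n, ?_⟩
      have : (m : ℂ) = (N:ℂ) * (n:ℂ) :=
        mul_left_cancel₀ h2 (by linear_combination hn)
      exact_mod_cast this
    simp_rw [hzk, hre, geom_sum_eq hz1, hzN]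
    simp

/- abstract discrete Parseval identity -/
lemma dft_parseval (R : Finset ℤ) (w : ℤ → ℤ → ℂ) (h : ℤ → ℂ) (N : ℝ)
    (orth : ∀ r ∈ R, ∀ r' ∈ R, ∑ k ∈ R, w r' k * conj (w r k) = if r' = r then (N:ℂ) else 0) :
    ∑ k ∈ R, ‖∑ r ∈ R, h r * conj (w r k)‖^2
      = N * ∑ r ∈ R, ‖h r‖^2 := by
  set S : ℤ → ℂ := fun k => ∑ r ∈ R, h r * conj (w r k) with hS
  have key : ∑ k ∈ R, S k * conj (S k) = (N:ℂ) * ∑ r ∈ R, h r * conj (h r) := by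
    have hconj : ∀ k, conj (S k) = ∑ r' ∈ R, conj (h r') * w r' k := by
      intro k
      rw [hS, map_sum]
      exact Finset.sum_congr rfl fun r _ => by simp [map_mul]
    calc ∑ k ∈ R, S k * conj (S k)
        = ∑ k ∈ R, ∑ r ∈ R, ∑ r' ∈ R,
            (h r * conj (h r')) * (w r' k * conj (w r k)) := by
          refine Finset.sum_congr rfl fun k _ => ?_
          rw [hconj, hS, Finset.sum_mul_sum]
          refine Finset.sum_congr rfl fun r _ => Finset.sum_congr rfl fun r' _ => by ring
      _ = ∑ r ∈ R, ∑ r' ∈ R, (h r * conj (h r')) * ∑ k ∈ R, w r' k * conj (w r k) := by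
          rw [Finset.sum_comm]
          refine Finset.sum_congr rfl fun r _ => ?_
          rw [Finset.sum_comm]
          exact Finset.sum_congr rfl fun r' _ => (Finset.mul_sum _ _ _).symm
      _ = ∑ r ∈ R, ∑ r' ∈ R, (h r * conj (h r')) * (if r' = r then (N:ℂ) else 0) := by
          refine Finset.sum_congr rfl fun r hr => Finset.sum_congr rfl fun r' hr' => ?_
          rw [orth r hr r' hr']
      _ = ∑ r ∈ R, (h r * conj (h r)) * N := by
          refine Finset.sum_congr rfl fun r hr => ?_
          rw [Finset.sum_eq_single r (fun r' _ hne => by rw [if_neg hne, mul_zero])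
            (fun hcon => absurd hr hcon)]
          rw [if_pos rfl]
      _ = (N:ℂ) * ∑ r ∈ R, h r * conj (h r) := by
          rw [Finset.mul_sum]; exact Finset.sum_congr rfl fun r _ => by ring
  have cast1 : ((∑ k ∈ R, ‖S k‖^2 : ℝ) : ℂ) = ∑ k ∈ R, S k * conj (S k) := by
    push_cast
    refine Finset.sum_congr rfl fun k _ => ?_
    rw [Complex.mul_conj, Complex.normSq_eq_norm_sq, Complex.ofReal_pow]
  have cast2 : ((N * ∑ r ∈ R, ‖h r‖^2 : ℝ) : ℂ)
      = (N:ℂ) * ∑ r ∈ R, h r * conj (h r) := by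
    push_cast
    congr 1
    refine Finset.sum_congr rfl fun r _ => ?_
    rw [Complex.mul_conj, Complex.normSq_eq_norm_sq, Complex.ofReal_pow]
  exact Complex.ofReal_injective (cast1.trans (key.trans cast2.symm))

/- structure of `Rset` -/
def aR (j : ℕ) : ℤ := if j = 0 then 0 else -(2^(j-1):ℤ) + 1

lemma Rset_eq (j : ℕ) : Rset j = Finset.Icc (aR j) (aR j + (2^j : ℕ) - 1) := by
  rcases j with _ | i
  · simp [Rset, aR]
  · simp only [Rset, aR, Nat.succ_ne_zero, if_false, Nat.succ_sub_one]
    congr 1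
    push_cast [pow_succ]
    ring

lemma mem_R_dvd_eq (j : ℕ) {r r' : ℤ} (hr : r ∈ Rset j) (hr' : r' ∈ Rset j)
    (hd : ((2^j : ℕ) : ℤ) ∣ r - r') : r = r' := by
  rw [Rset_eq, Finset.mem_Icc] at hr hr'
  obtain ⟨c, hc⟩ := hd
  have hN : (0:ℤ) < ((2^j : ℕ) : ℤ) := by positivity
  rcases lt_trichotomy c 0 with h | h | h
  · nlinarith [hr.1, hr.2, hr'.1, hr'.2]
  · rw [h, mul_zero] at hc; omega
  · nlinarith [hr.1, hr.2, hr'.1, hr'.2]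

def rho (j : ℕ) (n : ℤ) : ℤ := aR j + (n - aR j) % ((2^j : ℕ) : ℤ)

lemma rho_mem (j : ℕ) (n : ℤ) : rho j n ∈ Rset j := by
  have hN : (0:ℤ) < ((2^j : ℕ) : ℤ) := by positivity
  rw [Rset_eq, Finset.mem_Icc, rho]
  have h1 := Int.emod_nonneg (n - aR j) hN.ne'
  have h2 := Int.emod_lt_of_pos (n - aR j) hN
  omega

lemma rho_dvd (j : ℕ) (n : ℤ) : ((2^j : ℕ) : ℤ) ∣ n - rho j n := by
  refine ⟨(n - aR j) / ((2^j : ℕ) : ℤ), ?_⟩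
  have := Int.emod_add_mul_ediv (n - aR j) ((2^j : ℕ) : ℤ)
  rw [rho]
  linarith

lemma rho_eq_iff (j : ℕ) {r : ℤ} (hr : r ∈ Rset j) (n : ℤ) :
    rho j n = r ↔ ((2^j : ℕ) : ℤ) ∣ n - r := by
  constructor
  · rintro rfl; exact rho_dvd j n
  · intro h
    refine mem_R_dvd_eq j (rho_mem j n) hr ?_
    have h3 := dvd_sub h (rho_dvd j n)
    have h4 : n - r - (n - rho j n) = rho j n - r := by ring
    rwa [h4] at h3

/- the shift points -/
def tpt (j : ℕ) (k : ℤ) : AddCircle (1:ℝ) := (((2:ℝ)^(-(j:ℤ)) * (k:ℝ) : ℝ) : AddCircle (1:ℝ))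

lemma fourier_tpt (j : ℕ) (m k : ℤ) :
    (fourier m (tpt j k) : ℂ) = Complex.exp (2 * π * I * m * k / ((2^j : ℕ) : ℂ)) := by
  rw [tpt, fourier_coe_apply]
  congr 1
  have h2 : ((2:ℝ)^(-(j:ℤ)) : ℝ) = ((2^j : ℕ) : ℝ)⁻¹ := by
    rw [zpow_neg]
    push_cast
    rw [← zpow_natCast (2:ℝ) j]
  push_cast [h2]
  have hN : ((2^j : ℕ) : ℂ) ≠ 0 := Nat.cast_ne_zero.mpr (by positivity)
  field_simp

lemma fourier_res (j : ℕ) (k n r : ℤ) (hd : ((2^j : ℕ) : ℤ) ∣ n - r) :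
    (fourier n (tpt j k) : ℂ) = fourier r (tpt j k) := by
  obtain ⟨c, hc⟩ := hd
  have hn : n = r + ((2^j : ℕ) : ℤ) * c := by omega
  rw [fourier_tpt, fourier_tpt, hn]
  have hN : ((2^j : ℕ) : ℂ) ≠ 0 := Nat.cast_ne_zero.mpr (by positivity)
  have : 2 * ↑π * I * ↑(r + ((2^j : ℕ) : ℤ) * c) * ↑k / ((2^j : ℕ) : ℂ)
      = 2 * ↑π * I * ↑r * ↑k / ((2^j : ℕ) : ℂ) + (c * k) * (2 * ↑π * I) := by
    push_cast
    field_simp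
  rw [this, Complex.exp_add]
  have h4 : ((c : ℂ) * k) * (2 * ↑π * I) = ((c * k : ℤ) : ℂ) * (2 * ↑π * I) := by push_cast; ring
  rw [h4, Complex.exp_int_mul_two_pi_mul_I, mul_one]

lemma fourier_addc (n : ℤ) (x y : AddCircle (1:ℝ)) :
    fourier n (x + y) = fourier n x * fourier n y := by
  simp_rw [fourier_apply, smul_add, AddCircle.toCircle_add, Circle.coe_mul]

lemma fourier_negc (n : ℤ) (x : AddCircle (1:ℝ)) : fourier n (-x) = conj (fourier n x) := by
  rw [← fourier_neg, fourier_apply, fourier_apply, neg_smul, smul_neg]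

lemma orth_sum (j : ℕ) {r r' : ℤ} (hr : r ∈ Rset j) (hr' : r' ∈ Rset j) :
    ∑ k ∈ Rset j, (fourier r' (tpt j k) : ℂ) * conj ((fourier r (tpt j k) : ℂ))
      = if r' = r then ((2^j : ℕ) : ℂ) else 0 := by
  have hmul : ∀ k : ℤ, (fourier r' (tpt j k) : ℂ) * conj ((fourier r (tpt j k) : ℂ))
      = fourier (r' - r) (tpt j k) := by
    intro k
    rw [← fourier_neg, sub_eq_add_neg, fourier_add]
  simp_rw [hmul, fourier_tpt]
  rw [Rset_eq]
  rw [char_sum _ (by positivity) _ _]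
  by_cases h : r' = r
  · subst h; simp
  · rw [if_neg h, if_neg]
    intro hd
    exact h (mem_R_dvd_eq j hr' hr hd)

/- reconstruction of a trigonometric polynomial from its coefficients -/
lemma lp_coeFn_sum {ι : Type*} (s : Finset ι) (F : ι → lp (fun _ : ℤ => ℂ) 2) :
    (⇑(∑ i ∈ s, F i) : ℤ → ℂ) = ∑ i ∈ s, ⇑(F i) :=
  map_sum (AddMonoidHom.mk' (fun f : lp (fun _ : ℤ => ℂ) 2 => ⇑f) lp.coeFn_add) F s

lemma f_eq_sum (f : PL2) (hf : {n : ℤ | fCoeff f n ≠ 0}.Finite) :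
    f = ∑ n ∈ hf.toFinset, fCoeff f n • (fourierLp 2 n : PL2) := by
  classical
  apply fourierBasis.repr.injective
  apply lp.ext
  funext m
  rw [map_sum]
  rw [lp_coeFn_sum, Finset.sum_apply]
  have h1 : ∀ n : ℤ, fourierBasis.repr (fCoeff f n • (fourierLp 2 n : PL2))
      = fCoeff f n • lp.single 2 n (1:ℂ) := by
    intro n
    rw [_root_.map_smul, ← coe_fourierBasis, fourierBasis.repr_self]
  simp_rw [h1]
  rw [fourierBasis_repr]
  have h2 : ∀ n ∈ hf.toFinset, (⇑(fCoeff f n • lp.single 2 n (1:ℂ)) : ℤ → ℂ) m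
      = if n = m then fCoeff f n else 0 := by
    intro n _
    rw [lp.coeFn_smul, Pi.smul_apply, lp.single_apply]
    by_cases h : m = n
    · subst h; simp
    · simp [h, Ne.symm h]
  rw [Finset.sum_congr rfl h2, Finset.sum_ite_eq']
  by_cases hm : m ∈ hf.toFinset
  · simp [hm, fCoeff]
  · simp only [hm, if_false]
    have := Set.Finite.mem_toFinset hf (a := m)
    rw [this] at hm
    simpa [fCoeff] using not_not.mp (fun h => hm h)

lemma Lp_coeFn_sum {α ι : Type*} {m : MeasurableSpace α} {μ : Measure α}
    (s : Finset ι) (F : ι → Lp ℂ 2 μ) :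
    ⇑(∑ i ∈ s, F i) =ᵐ[μ] fun x => ∑ i ∈ s, F i x := by
  classical
  induction s using Finset.induction_on with
  | empty => simp only [Finset.sum_empty]; exact Lp.coeFn_zero ℂ 2 μ
  | insert a t hni ih =>
    rw [Finset.sum_insert hni]
    filter_upwards [Lp.coeFn_add (F a) (∑ i ∈ t, F i), ih] with x hx1 hx2
    simp only [hx1, Pi.add_apply, hx2, Finset.sum_insert hni]

lemma f_ae_sum (f : PL2) (s : Finset ℤ) (c : ℤ → ℂ)
    (h : f = ∑ n ∈ s, c n • (fourierLp 2 n : PL2)) :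
    ⇑f =ᵐ[(AddCircle.haarAddCircle : Measure (AddCircle (1:ℝ)))]
      fun x => ∑ n ∈ s, c n * fourier n x := by
  classical
  rw [h]
  refine (Lp_coeFn_sum s _).trans ?_
  have h2 : ∀ n ∈ s, ⇑(c n • (fourierLp 2 n : PL2))
      =ᵐ[(AddCircle.haarAddCircle : Measure (AddCircle (1:ℝ)))] fun x => c n * fourier n x := by
    intro n _
    filter_upwards [Lp.coeFn_smul (c n) (fourierLp 2 n : PL2), coeFn_fourierLp 2 n] with x h1 h2
    rw [h1]
    simp only [Pi.smul_apply, smul_eq_mul, h2]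
  have h3 := eventuallyEq_sum (f := fun n => ⇑(c n • (fourierLp 2 n : PL2)))
    (g := fun n x => c n * fourier n x) (s := s) h2
  filter_upwards [h3] with x hx
  simpa using hx

/- the basic translated-coefficient integral -/
lemma lemmaA (g : PL2) (n : ℤ) (t : AddCircle (1:ℝ)) :
    ∫ x : AddCircle (1:ℝ), fourier n x * conj (g (x + t)) ∂AddCircle.haarAddCircle
      = conj (fourier n t) * conj (fourierCoeff (g : AddCircle (1:ℝ) → ℂ) n) := by
  have h1 : ∫ x : AddCircle (1:ℝ), fourier n x * conj (g (x + t)) ∂AddCircle.haarAddCircle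
      = ∫ y : AddCircle (1:ℝ), fourier n (y + (-t)) * conj (g y) ∂AddCircle.haarAddCircle := by
    rw [← MeasurePreserving.integral_comp (measurePreserving_add_right AddCircle.haarAddCircle t)
      (MeasurableEquiv.addRight t).measurableEmbedding
      (fun y => fourier n (y + (-t)) * conj (g y))]
    simp [add_assoc]
  rw [h1]
  simp_rw [fourier_addc, fourier_negc, mul_comm (fourier n _ : ℂ), mul_assoc]
  rw [integral_const_mul]
  congr 1
  rw [fourierCoeff, ← integral_conj]
  congr 1 with y
  simp [fourier_neg, smul_eq_mul, mul_comm]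

lemma integ (ψ : PL2) (t : AddCircle (1:ℝ)) (n : ℤ) (c : ℂ) :
    Integrable (fun x => c * (fourier n x * conj (ψ (x + t)))) AddCircle.haarAddCircle := by
  have h0 : Integrable (⇑ψ) AddCircle.haarAddCircle := (Lp.memLp ψ).integrable one_le_two
  have h1 : Integrable (fun x : AddCircle (1:ℝ) => ψ (x + t)) AddCircle.haarAddCircle :=
    (measurePreserving_add_right AddCircle.haarAddCircle t).integrable_comp_emb
      (MeasurableEquiv.addRight t).measurableEmbedding |>.mpr h0
  have h2 : Integrable (fun x : AddCircle (1:ℝ) => conj (ψ (x + t))) AddCircle.haarAddCircle :=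
    (LinearIsometryEquiv.integrable_comp_iff Complex.conjLIE).mpr h1
  exact ((h2.bdd_mul (Continuous.aestronglyMeasurable (map_continuous (fourier n)))
    (c := 1) (ae_of_all _ fun x => by rw [fourier_apply]; exact le_of_eq (Circle.norm_coe _))).const_mul c)

/- expansion of the shifted inner product -/
lemma shiftInner_expand (f ψ : PL2) (hf : {n : ℤ | fCoeff f n ≠ 0}.Finite) (j : ℕ) (k : ℤ) :
    shiftInner f ψ j k
      = ∑ n ∈ hf.toFinset,
          (fCoeff f n * conj (fCoeff ψ n)) * conj ((fourier n (tpt j k) : ℂ)) := by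
  classical
  have hae := f_ae_sum f hf.toFinset (fCoeff f) (f_eq_sum f hf)
  have h0 : shiftInner f ψ j k
      = ∫ x : AddCircle (1:ℝ), f x * conj (ψ (x + tpt j k)) ∂AddCircle.haarAddCircle := rfl
  rw [h0]
  have h1 : ∫ x : AddCircle (1:ℝ), f x * conj (ψ (x + tpt j k)) ∂AddCircle.haarAddCircle
      = ∫ x : AddCircle (1:ℝ), (∑ n ∈ hf.toFinset, fCoeff f n * fourier n x)
          * conj (ψ (x + tpt j k)) ∂AddCircle.haarAddCircle := by
    refine integral_congr_ae ?_
    filter_upwards [hae] with x hx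
    rw [hx]
  rw [h1]
  simp_rw [Finset.sum_mul]
  rw [integral_finset_sum _ (fun n _ => by
    simpa [mul_assoc] using integ ψ (tpt j k) n (fCoeff f n))]
  refine Finset.sum_congr rfl fun n _ => ?_
  simp_rw [mul_assoc]
  rw [integral_const_mul, lemmaA]
  unfold fCoeff
  ring

/- tsum over a residue class equals the fiber sum -/
lemma tsum_fiber (F : ℤ → ℂ) (s : Finset ℤ) (hsupp : ∀ n ∉ s, F n = 0) (j : ℕ) {r : ℤ}
    (hr : r ∈ Rset j) :
    ∑' q : ℤ, F (((2^j : ℕ) : ℤ) * q + r)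
      = ∑ n ∈ s.filter (fun n => rho j n = r), F n := by
  classical
  set N : ℤ := ((2^j : ℕ) : ℤ) with hNdef
  have hN : (0:ℤ) < N := by positivity
  set t := (s.filter (fun n => rho j n = r)).image (fun n => (n - r) / N) with ht
  have h0 : ∀ q ∉ t, F (N * q + r) = 0 := by
    intro q hq
    by_contra hF
    apply hq
    have hmem : N * q + r ∈ s := by
      by_contra h; exact hF (hsupp _ h)
    have hrho : rho j (N * q + r) = r := (rho_eq_iff j hr _).mpr ⟨q, by rw [hNdef]; ring⟩
    refine Finset.mem_image.mpr ⟨N * q + r, Finset.mem_filter.mpr ⟨hmem, hrho⟩, ?_⟩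
    have h5 : N * q + r - r = N * q := by ring
    rw [h5]
    exact Int.mul_ediv_cancel_left _ hN.ne'
  rw [tsum_eq_sum h0, ht]
  rw [Finset.sum_image]
  · refine Finset.sum_congr rfl fun n hn => ?_
    congr 1
    have hd : N ∣ n - r := by
      rw [hNdef]
      exact (rho_eq_iff j hr n).mp (Finset.mem_filter.mp hn).2
    obtain ⟨c, hc⟩ := hd
    rw [hc, Int.mul_ediv_cancel_left _ hN.ne']
    omega
  · intro n hn m hm hnm
    have hdn : N ∣ n - r := by
      rw [hNdef]; exact (rho_eq_iff j hr n).mp (Finset.mem_filter.mp hn).2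
    have hdm : N ∣ m - r := by
      rw [hNdef]; exact (rho_eq_iff j hr m).mp (Finset.mem_filter.mp hm).2
    obtain ⟨c, hc⟩ := hdn
    obtain ⟨d, hd2⟩ := hdm
    dsimp only at hnm
    rw [hc, hd2, Int.mul_ediv_cancel_left _ hN.ne', Int.mul_ediv_cancel_left _ hN.ne'] at hnm
    rw [hnm] at hc
    omega

theorem shift_sum_eq_dft_sum
    (f ψ : PL2) (hf : {n : ℤ | fCoeff f n ≠ 0}.Finite) (j : ℕ) :
    ∑ k ∈ Rset j, ‖shiftInner f ψ j k‖^2 =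
      (2:ℝ)^j * ∑ n ∈ Rset j,
        ‖∑' q : ℤ, fCoeff f (2^j * q + n) * conj (fCoeff ψ (2^j * q + n))‖^2 := by
  classical
  set s := hf.toFinset with hs
  set F : ℤ → ℂ := fun n => fCoeff f n * conj (fCoeff ψ n) with hF
  set h : ℤ → ℂ := fun r => ∑ n ∈ s.filter (fun n => rho j n = r), F n with hh
  -- group the expansion by residue classes
  have hgroup : ∀ k : ℤ, ∑ n ∈ s, F n * conj ((fourier n (tpt j k) : ℂ))
      = ∑ r ∈ Rset j, h r * conj ((fourier r (tpt j k) : ℂ)) := by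
    intro k
    rw [← Finset.sum_fiberwise_of_maps_to (g := rho j) (fun n _ => rho_mem j n)
      (fun n => F n * conj ((fourier n (tpt j k) : ℂ)))]
    refine Finset.sum_congr rfl fun r hr => ?_
    rw [hh, Finset.sum_mul]
    refine Finset.sum_congr rfl fun n hn => ?_
    have hd : ((2^j : ℕ) : ℤ) ∣ n - r :=
      (rho_eq_iff j hr n).mp (Finset.mem_filter.mp hn).2
    rw [fourier_res j k n r hd]
  have hexp : ∀ k : ℤ, shiftInner f ψ j k
      = ∑ r ∈ Rset j, h r * conj ((fourier r (tpt j k) : ℂ)) := by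
    intro k
    rw [shiftInner_expand f ψ hf j k, ← hgroup k]
  simp_rw [hexp]
  -- apply the discrete Parseval identity
  rw [dft_parseval (Rset j) (fun r k => (fourier r (tpt j k) : ℂ)) h ((2^j : ℕ) : ℝ)
    (fun r hr r' hr' => by
      rw [orth_sum j hr hr']
      split <;> push_cast <;> ring)]
  have hcast : (((2^j : ℕ) : ℝ)) = (2:ℝ)^j := by push_cast; ring
  rw [hcast]
  congr 1
  refine Finset.sum_congr rfl fun r hr => ?_
  congr 2
  have hsupp : ∀ n ∉ s, F n = 0 := by
    intro n hn
    rw [hs, Set.Finite.mem_toFinset] at hn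
    simp only [Set.mem_setOf_eq, not_not] at hn
    rw [hF]
    simp [hn]
  have := tsum_fiber F s hsupp j hr
  show (∑ n ∈ s.filter (fun n => rho j n = r), F n) = _
  rw [← this]
  refine tsum_congr fun q => ?_
  rw [hF]
  congr 2 <;> push_cast <;> ring

end
end

section
/- Let f be a trigonometric polynomial (so f̂(n) = 0 for all but finitely many n ∈ ℤ), let ψ ∈ L₂ and j ∈ ℤ₊. Then Σ_{k∈R_j} |⟨f, S^k_j ψ⟩|² = 2^j Σ_{n∈ℤ} |f̂(n)|² |ψ̂(n)|² + 2^j Σ_{n∈ℤ} Σ_{q∈ℤ, q≠0} f̂(n) · conj(f̂(2^j q + n)) · conj(ψ̂(n)) · ψ̂(2^j q + n). -/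
open MeasureTheory Complex Finset Filter ComplexConjugate

noncomputable section

-- auxiliary development

open scoped Real

local notation "μ₁" => (@AddCircle.haarAddCircle (1:ℝ) _)

private lemma fourier_pt_add {n : ℤ} (a b : AddCircle (1:ℝ)) :
    fourier n (a + b) = fourier n a * fourier n b := by
  simp only [fourier_apply, smul_add, AddCircle.toCircle_add, Circle.coe_mul]

private lemma fourier_pt_neg {n : ℤ} (b : AddCircle (1:ℝ)) :
    fourier n (-b) = fourier (-n) b := by
  simp only [fourier_apply, smul_neg, neg_smul]

private lemma coeFn_sum_smul (s : Finset ℤ) (a : ℤ → ℂ) :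
    ⇑((∑ n ∈ s, a n • fourierLp 2 n : PL2)) =ᵐ[μ₁] fun x => ∑ n ∈ s, a n * fourier n x := by
  classical
  induction s using Finset.induction_on with
  | empty => simpa [Pi.zero_def] using MeasureTheory.Lp.coeFn_zero ℂ 2 μ₁
  | @insert i t hi ih =>
    rw [Finset.sum_insert hi]
    filter_upwards [MeasureTheory.Lp.coeFn_add (a i • fourierLp 2 i)
      (∑ n ∈ t, a n • fourierLp 2 n : PL2),
      MeasureTheory.Lp.coeFn_smul (a i) (fourierLp 2 i : PL2),
      coeFn_fourierLp (T := (1:ℝ)) 2 i, ih] with x h1 h2 h3 h4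
    rw [Finset.sum_insert hi]
    simp only [h1, Pi.add_apply, h2, Pi.smul_apply, h3, h4, smul_eq_mul]

private lemma integrable_term (ψ : PL2) (c : AddCircle (1:ℝ)) (n : ℤ) :
    Integrable (fun x => fourier n x * conj ((ψ : AddCircle (1:ℝ) → ℂ) (x + c))) μ₁ := by
  have h1 : Integrable (ψ : AddCircle (1:ℝ) → ℂ) μ₁ :=
    (MeasureTheory.Lp.memLp ψ).integrable (by norm_num)
  have h2 : Integrable (fun x => (ψ : AddCircle (1:ℝ) → ℂ) (x + c)) μ₁ :=
    ((measurePreserving_add_right μ₁ c).integrable_comp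
      (MeasureTheory.Lp.aestronglyMeasurable ψ)).2 h1
  have h3 : Integrable (fun x => conj ((ψ : AddCircle (1:ℝ) → ℂ) (x + c))) μ₁ := by
    refine ⟨Complex.continuous_conj.comp_aestronglyMeasurable h2.aestronglyMeasurable, ?_⟩
    simpa only [HasFiniteIntegral, RCLike.enorm_conj] using h2.hasFiniteIntegral
  exact h3.bdd_mul (c := 1) ((map_continuous (fourier n)).aestronglyMeasurable)
    (Eventually.of_forall fun x => by rw [fourier_apply, Circle.norm_coe])

private lemma conj_fCoeff (ψ : PL2) (n : ℤ) :
    conj (fCoeff ψ n) = ∫ y, fourier n y * conj ((ψ : AddCircle (1:ℝ) → ℂ) y) ∂μ₁ := by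
  rw [fCoeff, fourierCoeff, ← integral_conj]
  refine integral_congr_ae (Eventually.of_forall fun y => ?_)
  simp only [smul_eq_mul, map_mul, fourier_neg, Complex.conj_conj]

private lemma single_integral (ψ : PL2) (c : AddCircle (1:ℝ)) (n : ℤ) :
    ∫ x, fourier n x * conj ((ψ : AddCircle (1:ℝ) → ℂ) (x + c)) ∂μ₁
      = fourier (-n) c * conj (fCoeff ψ n) := by
  have sub := integral_add_right_eq_self (μ := μ₁)
    (fun y => fourier n (y + (-c)) * conj ((ψ : AddCircle (1:ℝ) → ℂ) y)) c
  have h0 : (∫ x, fourier n (x + c + -c) * conj ((ψ : AddCircle (1:ℝ) → ℂ) (x + c)) ∂μ₁)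
      = ∫ x, fourier n x * conj ((ψ : AddCircle (1:ℝ) → ℂ) (x + c)) ∂μ₁ := by
    refine integral_congr_ae (Eventually.of_forall fun x => ?_)
    simp only [add_assoc, add_neg_cancel, add_zero]
  rw [← h0, sub]
  have h1 : (∫ y, fourier n (y + -c) * conj ((ψ : AddCircle (1:ℝ) → ℂ) y) ∂μ₁)
      = ∫ y, fourier n (-c) * (fourier n y * conj ((ψ : AddCircle (1:ℝ) → ℂ) y)) ∂μ₁ := by
    refine integral_congr_ae (Eventually.of_forall fun y => ?_)
    simp only [fourier_pt_add]; ring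
  rw [h1, integral_const_mul, fourier_pt_neg, conj_fCoeff]

private lemma shiftInner_eq (f ψ : PL2) (hf : {n : ℤ | fCoeff f n ≠ 0}.Finite)
    (j : ℕ) (k : ℤ) :
    shiftInner f ψ j k = ∑ n ∈ hf.toFinset,
      fCoeff f n * conj (fCoeff ψ n) *
        fourier (-n) ((((2:ℝ)^(-(j:ℤ)) * (k:ℝ) : ℝ)) : AddCircle (1:ℝ)) := by
  classical
  set c : AddCircle (1:ℝ) := ((((2:ℝ)^(-(j:ℤ)) * (k:ℝ) : ℝ)) : AddCircle (1:ℝ)) with hc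
  set s := hf.toFinset with hs
  have hfs : f = ∑ n ∈ s, fCoeff f n • fourierLp 2 n := by
    refine (hasSum_fourier_series_L2 f).unique (hasSum_sum_of_ne_finset_zero fun n hn => ?_)
    have : fCoeff f n = 0 := by
      by_contra h
      exact hn (by simpa [hs, Set.Finite.mem_toFinset] using h)
    rw [show fourierCoeff (↑f : AddCircle (1:ℝ) → ℂ) n = fCoeff f n from rfl, this, zero_smul]
  have hcoe : ⇑f =ᵐ[μ₁] fun x => ∑ n ∈ s, fCoeff f n * fourier n x := by
    conv_lhs => rw [hfs]
    exact coeFn_sum_smul s (fun n => fCoeff f n)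
  have step1 : shiftInner f ψ j k
      = ∫ x, (∑ n ∈ s, fCoeff f n * fourier n x) *
          conj ((ψ : AddCircle (1:ℝ) → ℂ) (x + c)) ∂μ₁ := by
    rw [shiftInner]
    refine integral_congr_ae ?_
    filter_upwards [hcoe] with x hx
    rw [hx]
  rw [step1]
  have step2 : (∫ x, (∑ n ∈ s, fCoeff f n * fourier n x) *
          conj ((ψ : AddCircle (1:ℝ) → ℂ) (x + c)) ∂μ₁)
      = ∑ n ∈ s, fCoeff f n *
          ∫ x, fourier n x * conj ((ψ : AddCircle (1:ℝ) → ℂ) (x + c)) ∂μ₁ := by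
    rw [show (fun x => (∑ n ∈ s, fCoeff f n * fourier n x) *
          conj ((ψ : AddCircle (1:ℝ) → ℂ) (x + c)))
        = fun x => ∑ n ∈ s, fCoeff f n *
            (fourier n x * conj ((ψ : AddCircle (1:ℝ) → ℂ) (x + c))) from ?_]
    · rw [integral_finset_sum s fun n _ => (integrable_term ψ c n).const_mul _]
      exact Finset.sum_congr rfl fun n _ => integral_const_mul _ _
    · funext x; rw [Finset.sum_mul]; exact Finset.sum_congr rfl fun n _ => by ring
  rw [step2]
  refine Finset.sum_congr rfl fun n _ => ?_
  rw [single_integral]; ring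

private lemma char_sum_s5 (j : ℕ) (d : ℤ) :
    (∑ k ∈ Rset j, fourier d ((((2:ℝ)^(-(j:ℤ)) * (k:ℝ) : ℝ)) : AddCircle (1:ℝ)))
      = if ((2:ℤ)^j ∣ d) then ((2:ℂ)^j) else 0 := by
  classical
  set ζ : ℂ := Complex.exp (2 * Real.pi * Complex.I * d / (2:ℂ)^j) with hζ
  have h2j : ((2:ℂ))^j ≠ 0 := pow_ne_zero _ two_ne_zero
  have hterm : ∀ k : ℤ,
      fourier d ((((2:ℝ)^(-(j:ℤ)) * (k:ℝ) : ℝ)) : AddCircle (1:ℝ)) = ζ ^ k := by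
    intro k
    rw [fourier_coe_apply, hζ, ← Complex.exp_int_mul]
    congr 1
    push_cast
    rw [zpow_neg, zpow_natCast]
    field_simp
  have hζ0 : ζ ≠ 0 := Complex.exp_ne_zero _
  have hπ : (2:ℂ) * Real.pi * Complex.I ≠ 0 := by
    simp [Real.pi_ne_zero, Complex.I_ne_zero]
  have hiff : ζ = 1 ↔ (2:ℤ)^j ∣ d := by
    rw [hζ, Complex.exp_eq_one_iff]
    constructor
    · rintro ⟨m, hm⟩
      refine ⟨m, ?_⟩
      have h1 : (d:ℂ) = m * 2^j := by
        field_simp at hm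
        have := mul_left_cancel₀ hπ (show (2:ℂ) * Real.pi * Complex.I * d
            = (2:ℂ) * Real.pi * Complex.I * (m * 2^j) by linear_combination (2:ℂ) * Real.pi * Complex.I * hm)
        exact this
      have h2 : d = m * 2^j := by exact_mod_cast h1
      exact h2.trans (mul_comm _ _)
    · rintro ⟨m, hm⟩
      refine ⟨m, ?_⟩
      rw [hm]
      push_cast
      field_simp
  have hRset : ∃ a : ℤ, Rset j = (Finset.range (2^j)).image (fun i : ℕ => a + (i:ℤ)) := by
    clear_value ζ
    cases j with
    | zero =>
      refine ⟨0, ?_⟩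
      ext k
      simp [Rset]
    | succ m =>
      refine ⟨-(2^m) + 1, ?_⟩
      have hpm : (0:ℤ) < 2^m := pow_pos two_pos m
      have hcast : ((2^(m+1) : ℕ) : ℤ) = 2^m + 2^m := by push_cast; ring
      ext k
      simp only [Rset, Nat.succ_ne_zero, if_false, Nat.add_sub_cancel, Finset.mem_Icc,
        Finset.mem_image, Finset.mem_range]
      constructor
      · rintro ⟨h1, h2⟩
        refine ⟨(k + 2^m - 1).toNat, ?_, ?_⟩
        · have : ((k + 2^m - 1).toNat : ℤ) = k + 2^m - 1 := Int.toNat_of_nonneg (by omega)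
          omega
        · omega
      · rintro ⟨i, hi, rfl⟩
        have : (i:ℤ) < 2^m + 2^m := by omega
        omega
  obtain ⟨a, ha⟩ := hRset
  have himg : (∑ k ∈ Rset j, ζ ^ k) = ∑ i ∈ Finset.range (2^j), ζ ^ (a + (i:ℤ)) := by
    rw [ha, Finset.sum_image]
    intro x _ y _ h
    have h' : a + (x:ℤ) = a + (y:ℤ) := h
    omega
  have hsum : (∑ k ∈ Rset j, fourier d ((((2:ℝ)^(-(j:ℤ)) * (k:ℝ) : ℝ)) : AddCircle (1:ℝ)))
      = ∑ i ∈ Finset.range (2^j), ζ ^ a * ζ ^ (i:ℕ) := by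
    rw [Finset.sum_congr rfl fun k _ => hterm k, himg]
    exact Finset.sum_congr rfl fun i _ => by
      rw [zpow_add₀ hζ0, zpow_natCast]
  rw [hsum]
  by_cases hdvd : (2:ℤ)^j ∣ d
  · rw [if_pos hdvd]
    have hζ1 : ζ = 1 := hiff.2 hdvd
    simp [hζ1]
  · rw [if_neg hdvd]
    have hζ1 : ζ ≠ 1 := fun h => hdvd (hiff.1 h)
    have hζN : ζ ^ ((2:ℕ)^j) = 1 := by
      rw [hζ, ← Complex.exp_nat_mul]
      have : ((2^j : ℕ) : ℂ) * (2 * Real.pi * Complex.I * d / (2:ℂ)^j)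
          = d * (2 * Real.pi * Complex.I) := by
        push_cast
        field_simp
      rw [this]
      exact Complex.exp_int_mul_two_pi_mul_I d
    rw [← Finset.mul_sum, geom_sum_eq hζ1, hζN]
    simp


theorem shift_sum_diagonal_offdiagonal
    (f ψ : PL2) (hf : {n : ℤ | fCoeff f n ≠ 0}.Finite) (j : ℕ) :
    ((∑ k ∈ Rset j, ‖shiftInner f ψ j k‖^2 : ℝ) : ℂ) =
      (2:ℂ)^j * ∑' n : ℤ,
        ((‖fCoeff f n‖^2 * ‖fCoeff ψ n‖^2 : ℝ) : ℂ)
      + (2:ℂ)^j * ∑' n : ℤ, ∑' q : {q : ℤ // q ≠ 0},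
          fCoeff f n * conj (fCoeff f (2^j * (q:ℤ) + n)) *
            conj (fCoeff ψ n) * fCoeff ψ (2^j * (q:ℤ) + n) := by
  classical
  set s := hf.toFinset with hs
  have hFs : ∀ n, n ∉ s → fCoeff f n = 0 := by
    intro n hn
    by_contra h
    exact hn (by simpa [hs, Set.Finite.mem_toFinset] using h)
  set F := fCoeff f with hF
  set P := fCoeff ψ with hP
  set A : ℤ → ℤ → ℂ := fun n m => F n * conj (P n) * (conj (F m) * P m) with hA
  have h2jZ : ((2:ℤ)^j) ≠ 0 := pow_ne_zero _ two_ne_zero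
  set fil : ℤ → Finset ℤ := fun n => s.filter (fun m => (2:ℤ)^j ∣ (m - n)) with hfil'
  have hfil : ∀ n : ℤ, n ∈ s → n ∈ fil n := fun n hn =>
    Finset.mem_filter.2 ⟨hn, by simp⟩
  -- Step 1 : left side as a finite double sum
  have key : ((∑ k ∈ Rset j, ‖shiftInner f ψ j k‖^2 : ℝ) : ℂ)
      = (2:ℂ)^j * ∑ n ∈ s, ∑ m ∈ fil n, A n m := by
    have hzz : ∀ z : ℂ, ((‖z‖ : ℝ) : ℂ)^2 = z * conj z := fun z => by
      rw [← Complex.ofReal_pow, Complex.sq_norm]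
      exact (Complex.mul_conj z).symm
    push_cast
    have h1 : ∀ k : ℤ, ((‖shiftInner f ψ j k‖ : ℝ) : ℂ)^2
        = ∑ n ∈ s, ∑ m ∈ s, A n m *
            fourier (m - n) ((((2:ℝ)^(-(j:ℤ)) * (k:ℝ) : ℝ)) : AddCircle (1:ℝ)) := by
      intro k
      set c : AddCircle (1:ℝ) := ((((2:ℝ)^(-(j:ℤ)) * (k:ℝ) : ℝ)) : AddCircle (1:ℝ)) with hc
      rw [hzz, shiftInner_eq f ψ hf j k, map_sum, Finset.sum_mul_sum]
      refine Finset.sum_congr rfl fun n _ => Finset.sum_congr rfl fun m _ => ?_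
      have hcm : conj (F m * conj (P m) * fourier (-m) c)
          = conj (F m) * P m * fourier m c := by
        rw [map_mul, map_mul, Complex.conj_conj, fourier_neg, Complex.conj_conj]
      rw [hcm]
      have hfa : fourier m c * fourier (-n) c = fourier (m - n) c := by
        rw [← fourier_add, sub_eq_add_neg]
      calc F n * conj (P n) * fourier (-n) c * (conj (F m) * P m * fourier m c)
          = A n m * (fourier m c * fourier (-n) c) := by rw [hA]; ring
        _ = A n m * fourier (m - n) c := by rw [hfa]
    rw [Finset.sum_congr rfl fun k _ => h1 k]
    rw [Finset.sum_comm]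
    have h2 : ∀ n : ℤ, (∑ k ∈ Rset j, ∑ m ∈ s, A n m *
          fourier (m - n) ((((2:ℝ)^(-(j:ℤ)) * (k:ℝ) : ℝ)) : AddCircle (1:ℝ)))
        = (2:ℂ)^j * ∑ m ∈ fil n, A n m := by
      intro n
      rw [Finset.sum_comm]
      have h3 : ∀ m : ℤ, (∑ k ∈ Rset j, A n m *
            fourier (m - n) ((((2:ℝ)^(-(j:ℤ)) * (k:ℝ) : ℝ)) : AddCircle (1:ℝ)))
          = if ((2:ℤ)^j ∣ (m - n)) then (2:ℂ)^j * A n m else 0 := by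
        intro m
        rw [← Finset.mul_sum, char_sum_s5]
        split_ifs <;> ring
      rw [Finset.sum_congr rfl fun m _ => h3 m, ← Finset.sum_filter, hfil', Finset.mul_sum]
    rw [Finset.sum_congr rfl fun n _ => h2 n, ← Finset.mul_sum]
  -- Step 2 : diagonal tsum
  have hdiag : (∑' n : ℤ, ((‖F n‖^2 * ‖P n‖^2 : ℝ) : ℂ))
      = ∑ n ∈ s, A n n := by
    rw [tsum_eq_sum (s := s) (fun n hn => by rw [hFs n hn]; simp)]
    refine Finset.sum_congr rfl fun n _ => ?_
    calc ((‖F n‖^2 * ‖P n‖^2 : ℝ) : ℂ)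
        = ((Complex.normSq (F n) : ℝ) : ℂ) * ((Complex.normSq (P n) : ℝ) : ℂ) := by
          rw [← Complex.sq_norm, ← Complex.sq_norm]; push_cast; ring
      _ = (F n * conj (F n)) * (P n * conj (P n)) := by
          rw [Complex.mul_conj, Complex.mul_conj]
      _ = A n n := by rw [hA]; ring
  -- Step 3 : off-diagonal tsum
  have hoff : (∑' n : ℤ, ∑' q : {q : ℤ // q ≠ 0},
        F n * conj (F (2^j * (q:ℤ) + n)) * conj (P n) * P (2^j * (q:ℤ) + n))
      = ∑ n ∈ s, ∑ m ∈ (fil n).erase n, A n m := by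
    rw [tsum_eq_sum (s := s) (fun n hn => by rw [hFs n hn]; simp)]
    refine Finset.sum_congr rfl fun n hn => ?_
    set G : ℤ → ℂ := fun q => F n * conj (F (2^j * q + n)) * conj (P n) * P (2^j * q + n)
      with hG
    have hsub : (∑' q : {q : ℤ // q ≠ 0}, G (q:ℤ))
        = ∑' q : ℤ, Set.indicator {q : ℤ | q ≠ 0} G q := tsum_subtype _ G
    rw [show (∑' q : {q : ℤ // q ≠ 0},
        F n * conj (F (2^j * (q:ℤ) + n)) * conj (P n) * P (2^j * (q:ℤ) + n))
        = ∑' q : {q : ℤ // q ≠ 0}, G (q:ℤ) from rfl, hsub]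
    have hsupp : ∀ q : ℤ, q ∉ (((fil n).erase n).image (fun m => (m - n) / 2^j)) →
        Set.indicator {q : ℤ | q ≠ 0} G q = 0 := by
      intro q hq
      rw [Set.indicator_apply]
      split_ifs with hq0
      · by_contra hGq
        apply hq
        have hFm : F (2^j * q + n) ≠ 0 := by
          intro h
          exact hGq (by rw [hG]; simp [h])
        have hms : (2^j * q + n) ∈ s := by
          simpa [hs, Set.Finite.mem_toFinset, hF] using hFm
        refine Finset.mem_image.2 ⟨2^j * q + n, ?_, ?_⟩
        · refine Finset.mem_erase.2 ⟨?_, Finset.mem_filter.2 ⟨hms, ⟨q, by ring⟩⟩⟩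
          intro h0
          have h1 : (2:ℤ)^j * q = 0 := by linarith [congrArg id h0]
          rcases mul_eq_zero.1 h1 with h2 | h2
          · exact h2jZ h2
          · exact hq0 h2
        · rw [add_sub_cancel_right]
          exact Int.mul_ediv_cancel_left _ h2jZ
      · rfl
    rw [tsum_eq_sum (s := ((fil n).erase n).image (fun m => (m - n) / 2^j)) hsupp]
    have hinj : ∀ x ∈ (fil n).erase n, ∀ y ∈ (fil n).erase n,
        (x - n) / 2^j = (y - n) / 2^j → x = y := by
      intro x hx y hy hxy
      have hdx : (2:ℤ)^j ∣ (x - n) := (Finset.mem_filter.1 (Finset.mem_of_mem_erase hx)).2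
      have hdy : (2:ℤ)^j ∣ (y - n) := (Finset.mem_filter.1 (Finset.mem_of_mem_erase hy)).2
      have hx' : (2:ℤ)^j * ((x - n) / 2^j) = x - n := Int.mul_ediv_cancel' hdx
      have hy' : (2:ℤ)^j * ((y - n) / 2^j) = y - n := Int.mul_ediv_cancel' hdy
      have : x - n = y - n := by rw [← hx', ← hy', hxy]
      omega
    rw [Finset.sum_image hinj]
    refine Finset.sum_congr rfl fun m hm => ?_
    obtain ⟨hmn, hmf⟩ := Finset.mem_erase.1 hm
    have hdvd : (2:ℤ)^j ∣ (m - n) := (Finset.mem_filter.1 hmf).2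
    have hq : (2:ℤ)^j * ((m - n) / 2^j) = m - n := Int.mul_ediv_cancel' hdvd
    have hqne : (m - n) / 2^j ≠ 0 := by
      intro h0
      rw [h0, mul_zero] at hq
      omega
    rw [Set.indicator_apply, if_pos (show (m - n) / 2^j ∈ {q : ℤ | q ≠ 0} from hqne), hG]
    show F n * conj (F (2^j * ((m - n) / 2^j) + n)) * conj (P n) * P (2^j * ((m - n) / 2^j) + n)
        = A n m
    rw [hq, sub_add_cancel, hA]
    ring
  rw [hdiag, hoff, key]
  have hsplit : ∀ n ∈ s, (∑ m ∈ fil n, A n m)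
      = A n n + ∑ m ∈ (fil n).erase n, A n m := fun n hn =>
    (Finset.add_sum_erase _ _ (hfil n hn)).symm
  rw [Finset.sum_congr rfl hsplit, Finset.sum_add_distrib]
  ring

end
end

section
/- Suppose functions φ_j ∈ L₂ (j ∈ ℕ) satisfy the refinement equation with masks â_{j+1} ∈ S(2^{j+1}), and for each j ∈ ℤ₊ the functions ψ^m_j ∈ L₂ (m = 1,…,ρ_j, ρ_j positive integers) are defined by the wavelet equation with masks b̂^m_{j+1} ∈ S(2^{j+1}); let θ_j be the fundamental coefficients. Then for every odd integer k, every n ∈ ℤ and every j ∈ ℤ₊, Σ_{q=0}^{j} 2^q Σ_{m=1}^{ρ_q} conj(ψ̂^m_q(n)) · ψ̂^m_q(2^j k + n) = 2^{j+1} · ( Σ_{m=1}^{ρ_j} conj(b̂^m_{j+1}(n)) · b̂^m_{j+1}(2^j + n) + θ_j(n) · conj(â_{j+1}(n)) · â_{j+1}(2^j + n) ) · conj(φ̂_{j+1}(n)) · φ̂_{j+1}(2^j k + n). -/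
open MeasureTheory Complex Finset Filter ComplexConjugate

noncomputable section

/-- Fundamental coefficients: `θ₀(n) = 0`,
`θ_{j+1}(n) = Σ_{m=1}^{ρ_j} |b̂^m_{j+1}(n)|² + θ_j(n)·|â_{j+1}(n)|²`. -/
def theta (ρ : ℕ → ℕ) (a : ℕ → ℤ → ℂ) (b : ℕ → ℕ → ℤ → ℂ) : ℕ → ℤ → ℝ
  | 0, _ => 0
  | (j+1), n =>
      (∑ m ∈ Finset.Icc 1 (ρ j), ‖b (j+1) m n‖^2)
        + theta ρ a b j n * ‖a (j+1) n‖^2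

private lemma per_shift {f : ℤ → ℂ} {p : ℤ} (h : ∀ n, f (n + p) = f n) :
    ∀ t : ℤ, ∀ n : ℤ, f (n + p * t) = f n := by
  intro t
  induction t using Int.induction_on with
  | zero => simp
  | succ i ih =>
      intro n
      have h1 : n + p * ((i : ℤ) + 1) = (n + p * i) + p := by ring
      rw [h1, h, ih]
  | pred i ih =>
      intro n
      have h1 : (n + p * (-(i:ℤ) - 1)) + p = n + p * (-(i:ℤ)) := by ring
      have h2 := h (n + p * (-(i:ℤ) - 1))
      rw [h1] at h2
      rw [← h2, ih]

private lemma sqrt2_term (b₁ b₂ Φ₁ Φ₂ : ℂ) :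
    conj ((Real.sqrt 2 : ℂ) * b₁ * Φ₁) * ((Real.sqrt 2 : ℂ) * b₂ * Φ₂)
      = 2 * (conj b₁ * b₂) * (conj Φ₁ * Φ₂) := by
  have h2 : (Real.sqrt 2 : ℂ) * (Real.sqrt 2 : ℂ) = 2 := by
    norm_cast
    rw [Real.mul_self_sqrt] <;> norm_num
  simp only [map_mul, Complex.conj_ofReal]
  rw [← h2]; ring

private lemma conj_mul_self (z : ℂ) : conj z * z = ((‖z‖ ^ 2 : ℝ) : ℂ) := by
  rw [Complex.sq_norm, Complex.normSq_eq_conj_mul_self]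

section main

variable (ρ : ℕ → ℕ) (φ : ℕ → PL2) (ψ : ℕ → ℕ → PL2)
    (a : ℕ → ℤ → ℂ) (b : ℕ → ℕ → ℤ → ℂ)

private lemma key_sum
    (hwav : ∀ j : ℕ, ∀ m, 1 ≤ m → m ≤ ρ j → ∀ n : ℤ,
        fCoeff (ψ j m) n = (Real.sqrt 2 : ℂ) * b (j+1) m n * fCoeff (φ (j+1)) n)
    (q : ℕ) (n N : ℤ) :
    ∑ m ∈ Finset.Icc 1 (ρ q), conj (fCoeff (ψ q m) n) * fCoeff (ψ q m) N
      = 2 * (∑ m ∈ Finset.Icc 1 (ρ q), conj (b (q+1) m n) * b (q+1) m N)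
          * (conj (fCoeff (φ (q+1)) n) * fCoeff (φ (q+1)) N) := by
  rw [Finset.mul_sum, Finset.sum_mul]
  refine Finset.sum_congr rfl (fun m hm => ?_)
  rw [Finset.mem_Icc] at hm
  rw [hwav q m hm.1 hm.2 n, hwav q m hm.1 hm.2 N, sqrt2_term]

private lemma aux_theta
    (ha_per : ∀ j : ℕ, 1 ≤ j → ∀ n : ℤ, a (j+1) (n + 2^(j+1)) = a (j+1) n)
    (hb_per : ∀ j : ℕ, ∀ m, 1 ≤ m → m ≤ ρ j → ∀ n : ℤ,
        b (j+1) m (n + 2^(j+1)) = b (j+1) m n)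
    (href : ∀ j : ℕ, 1 ≤ j → ∀ n : ℤ,
        fCoeff (φ j) n = (Real.sqrt 2 : ℂ) * a (j+1) n * fCoeff (φ (j+1)) n)
    (hwav : ∀ j : ℕ, ∀ m, 1 ≤ m → m ≤ ρ j → ∀ n : ℤ,
        fCoeff (ψ j m) n = (Real.sqrt 2 : ℂ) * b (j+1) m n * fCoeff (φ (j+1)) n) :
    ∀ j : ℕ, ∀ n M : ℤ,
      ∑ q ∈ Finset.range (j+1), (2:ℂ)^q *
          ∑ m ∈ Finset.Icc 1 (ρ q),
            conj (fCoeff (ψ q m) n) * fCoeff (ψ q m) (2^(j+1) * M + n)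
        = (2:ℂ)^(j+1) * ((theta ρ a b (j+1) n : ℝ) : ℂ) *
            conj (fCoeff (φ (j+1)) n) * fCoeff (φ (j+1)) (2^(j+1) * M + n) := by
  intro j
  induction j with
  | zero =>
      intro n M
      rw [Finset.sum_range_one, key_sum ρ φ ψ b hwav 0 n ((2:ℤ)^(0+1) * M + n)]
      have hb : ∀ m ∈ Finset.Icc 1 (ρ 0),
          conj (b 1 m n) * b 1 m ((2:ℤ)^(0+1) * M + n)
            = ((‖b 1 m n‖ ^ 2 : ℝ) : ℂ) := by
        intro m hm
        rw [Finset.mem_Icc] at hm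
        have harg : (2:ℤ)^(0+1) * M + n = n + 2^(0+1) * M := by ring
        rw [harg, per_shift (hb_per 0 m hm.1 hm.2) M n, conj_mul_self]
      rw [Finset.sum_congr rfl hb]
      simp only [theta]
      push_cast
      ring
  | succ j ih =>
      intro n M
      rw [Finset.sum_range_succ]
      have harg : (2:ℤ)^(j+1+1) * M + n = 2^(j+1) * (2*M) + n := by ring
      rw [harg]
      rw [ih n (2*M)]
      rw [key_sum ρ φ ψ b hwav (j+1) n ((2:ℤ)^(j+1) * (2*M) + n)]
      have haN : a (j+1+1) ((2:ℤ)^(j+1) * (2*M) + n) = a (j+1+1) n := by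
        have h1 : (2:ℤ)^(j+1) * (2*M) + n = n + 2^(j+1+1) * M := by ring
        rw [h1, per_shift (ha_per (j+1) (by omega)) M n]
      have hb : ∀ m ∈ Finset.Icc 1 (ρ (j+1)),
          conj (b (j+1+1) m n) * b (j+1+1) m ((2:ℤ)^(j+1) * (2*M) + n)
            = ((‖b (j+1+1) m n‖ ^ 2 : ℝ) : ℂ) := by
        intro m hm
        rw [Finset.mem_Icc] at hm
        have h1 : (2:ℤ)^(j+1) * (2*M) + n = n + 2^(j+1+1) * M := by ring
        rw [h1, per_shift (hb_per (j+1) m hm.1 hm.2) M n, conj_mul_self]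
      rw [Finset.sum_congr rfl hb]
      have hsq : conj (fCoeff (φ (j+1)) n) * fCoeff (φ (j+1)) ((2:ℤ)^(j+1) * (2*M) + n)
          = ((‖a (j+1+1) n‖ ^ 2 : ℝ) : ℂ) * 2 *
              (conj (fCoeff (φ (j+1+1)) n) * fCoeff (φ (j+1+1)) ((2:ℤ)^(j+1) * (2*M) + n)) := by
        rw [href (j+1) (by omega) n, href (j+1) (by omega) ((2:ℤ)^(j+1) * (2*M) + n),
          haN, sqrt2_term, conj_mul_self]
        ring
      have hth : ((theta ρ a b (j+1+1) n : ℝ) : ℂ)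
          = ((∑ m ∈ Finset.Icc 1 (ρ (j+1)), ‖b (j+1+1) m n‖^2 : ℝ) : ℂ)
            + ((theta ρ a b (j+1) n : ℝ) : ℂ) * ((‖a (j+1+1) n‖^2 : ℝ) : ℂ) := by
        simp only [theta]; push_cast; ring
      push_cast at hsq hth ⊢
      linear_combination ((2:ℂ)^(j+1) * ((theta ρ a b (j+1) n : ℝ) : ℂ)) * hsq
        - ((2:ℂ)^(j+1+1) * conj (fCoeff (φ (j+1+1)) n)
            * fCoeff (φ (j+1+1)) ((2:ℤ)^(j+1) * (2*M) + n)) * hth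

end main

theorem offdiagonal_sum_eq_mask_expression
    (ρ : ℕ → ℕ) (hρ : ∀ j, 0 < ρ j)
    (φ : ℕ → PL2) (ψ : ℕ → ℕ → PL2)
    (a : ℕ → ℤ → ℂ) (b : ℕ → ℕ → ℤ → ℂ)
    (ha_per : ∀ j : ℕ, 1 ≤ j → ∀ n : ℤ, a (j+1) (n + 2^(j+1)) = a (j+1) n)
    (hb_per : ∀ j : ℕ, ∀ m, 1 ≤ m → m ≤ ρ j → ∀ n : ℤ,
        b (j+1) m (n + 2^(j+1)) = b (j+1) m n)
    (href : ∀ j : ℕ, 1 ≤ j → ∀ n : ℤ,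
        fCoeff (φ j) n = (Real.sqrt 2 : ℂ) * a (j+1) n * fCoeff (φ (j+1)) n)
    (hwav : ∀ j : ℕ, ∀ m, 1 ≤ m → m ≤ ρ j → ∀ n : ℤ,
        fCoeff (ψ j m) n = (Real.sqrt 2 : ℂ) * b (j+1) m n * fCoeff (φ (j+1)) n) :
    ∀ k : ℤ, Odd k → ∀ n : ℤ, ∀ j : ℕ,
      ∑ q ∈ Finset.range (j+1), (2:ℂ)^q *
          ∑ m ∈ Finset.Icc 1 (ρ q),
            conj (fCoeff (ψ q m) n) * fCoeff (ψ q m) (2^j * k + n)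
        = (2:ℂ)^(j+1) *
            ((∑ m ∈ Finset.Icc 1 (ρ j), conj (b (j+1) m n) * b (j+1) m (2^j + n))
              + ((theta ρ a b j n : ℝ) : ℂ) * conj (a (j+1) n) * a (j+1) (2^j + n)) *
            conj (fCoeff (φ (j+1)) n) * fCoeff (φ (j+1)) (2^j * k + n) := by
  intro k hk n j
  obtain ⟨t, ht⟩ := hk
  cases j with
  | zero =>
      rw [Finset.sum_range_one, key_sum ρ φ ψ b hwav 0 n ((2:ℤ)^0 * k + n)]
      have hb : ∀ m ∈ Finset.Icc 1 (ρ 0),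
          conj (b 1 m n) * b 1 m ((2:ℤ)^0 * k + n)
            = conj (b 1 m n) * b 1 m ((2:ℤ)^0 + n) := by
        intro m hm
        rw [Finset.mem_Icc] at hm
        have h1 : (2:ℤ)^0 * k + n = ((2:ℤ)^0 + n) + 2^(0+1) * t := by rw [ht]; ring
        rw [h1, per_shift (hb_per 0 m hm.1 hm.2) t ((2:ℤ)^0 + n)]
      rw [Finset.sum_congr rfl hb]
      simp only [theta]
      push_cast
      ring
  | succ j =>
      rw [Finset.sum_range_succ]
      rw [aux_theta ρ φ ψ a b ha_per hb_per href hwav j n k]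
      rw [key_sum ρ φ ψ b hwav (j+1) n ((2:ℤ)^(j+1) * k + n)]
      have haN : a (j+1+1) ((2:ℤ)^(j+1) * k + n) = a (j+1+1) ((2:ℤ)^(j+1) + n) := by
        have h1 : (2:ℤ)^(j+1) * k + n = ((2:ℤ)^(j+1) + n) + 2^(j+1+1) * t := by rw [ht]; ring
        rw [h1, per_shift (ha_per (j+1) (by omega)) t ((2:ℤ)^(j+1) + n)]
      have hsq : conj (fCoeff (φ (j+1)) n) * fCoeff (φ (j+1)) ((2:ℤ)^(j+1) * k + n)
          = 2 * (conj (a (j+1+1) n) * a (j+1+1) ((2:ℤ)^(j+1) + n)) *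
              (conj (fCoeff (φ (j+1+1)) n) * fCoeff (φ (j+1+1)) ((2:ℤ)^(j+1) * k + n)) := by
        rw [href (j+1) (by omega) n, href (j+1) (by omega) ((2:ℤ)^(j+1) * k + n),
          haN, sqrt2_term]
      have hb : ∀ m ∈ Finset.Icc 1 (ρ (j+1)),
          conj (b (j+1+1) m n) * b (j+1+1) m ((2:ℤ)^(j+1) * k + n)
            = conj (b (j+1+1) m n) * b (j+1+1) m ((2:ℤ)^(j+1) + n) := by
        intro m hm
        rw [Finset.mem_Icc] at hm
        have h1 : (2:ℤ)^(j+1) * k + n = ((2:ℤ)^(j+1) + n) + 2^(j+1+1) * t := by rw [ht]; ring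
        rw [h1, per_shift (hb_per (j+1) m hm.1 hm.2) t ((2:ℤ)^(j+1) + n)]
      rw [Finset.sum_congr rfl hb]
      linear_combination ((2:ℂ)^(j+1) * ((theta ρ a b (j+1) n : ℝ) : ℂ)) * hsq

end
end
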